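/- Let \beta > 1 and 0 < \epsilon < \pi. Suppose f : \mathbb{R} \to \mathbb{C} is continuous with support contained in [-\pi+\epsilon, \pi-\epsilon]. Then the 2\pi-periodic extension of f|_{[-\pi,\pi]} has absolutely summable Fourier coefficients with \sup_n |n|^\beta |\hat f_n| < \infty if and only if the Fourier transform of f (as a function on \mathbb{R}) is in L^1(\mathbb{R}) with \sup_\xi |\xi|^\beta |\hat f(\xi)| < \infty. -/

import Mathlib

open MeasureTheory Real FourierTransform

lemma aux13_int_eq (h : ℝ → ℂ) (hsupp : ∀ x : ℝ, x ∉ Set.Ioc (-π) π → h x = 0) :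
    ∫ x in (-π)..π, h x = ∫ x, h x := by
  rw [intervalIntegral.integral_of_le (by linarith [pi_pos])]
  exact setIntegral_eq_integral_of_forall_compl_eq_zero hsupp

lemma aux13_norm_exp (r : ℝ) : ‖Complex.exp ((r : ℂ) * Complex.I)‖ = 1 := by
  rw [Complex.norm_exp]
  simp

lemma aux13_norm_exp' (a b : ℝ) : ‖Complex.exp (-Complex.I * (a:ℂ) * (b:ℂ))‖ = 1 := by
  have : -Complex.I * (a:ℂ) * (b:ℂ) = ((-(a*b) : ℝ) : ℂ) * Complex.I := by push_cast; ring
  rw [this, aux13_norm_exp]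

lemma aux13_norm_exp'' (a b : ℝ) : ‖Complex.exp (Complex.I * (a:ℂ) * (b:ℂ))‖ = 1 := by
  have : Complex.I * (a:ℂ) * (b:ℂ) = (((a*b) : ℝ) : ℂ) * Complex.I := by push_cast; ring
  rw [this, aux13_norm_exp]

-- relation: our integral transform equals Real.fourierIntegral at η/(2π)
lemma aux13_FT_eq (g : ℝ → ℂ) (η : ℝ) :
    (∫ x : ℝ, g x * Complex.exp (-Complex.I * (η:ℂ) * (x:ℂ))) = 𝓕 g (η / (2*π)) := by
  rw [Real.fourier_real_eq_integral_exp_smul]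
  congr 1
  ext x
  rw [smul_eq_mul, mul_comm]
  congr 2
  have hπ : (π : ℂ) ≠ 0 := Complex.ofReal_ne_zero.mpr pi_ne_zero
  push_cast
  field_simp

lemma aux13_phi_decay (φ : ℝ → ℂ) (hφ : ContDiff ℝ ((⊤:ℕ∞)) φ) (hφc : HasCompactSupport φ) (k : ℕ) :
    ∃ B : ℝ, 0 ≤ B ∧ ∀ η : ℝ,
      (max 1 |η|) ^ k * ‖∫ x : ℝ, φ x * Complex.exp (-Complex.I * (η:ℂ) * (x:ℂ))‖ ≤ B := by
  -- iterated derivatives are continuous with compact support, hence integrable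
  have hder : ∀ n : ℕ, Integrable (iteratedDeriv n φ) := by
    intro n
    have hcs : HasCompactSupport (iteratedDeriv n φ) := by
      rw [iteratedDeriv_eq_equiv_comp]
      exact (hφc.iteratedFDeriv n).comp_left (map_zero _)
    exact (hφ.continuous_iteratedDeriv n (by exact_mod_cast le_top)).integrable_of_hasCompactSupport hcs
  have key : 𝓕 (iteratedDeriv k φ) =
      fun x : ℝ ↦ (2 * π * Complex.I * x) ^ k • (𝓕 φ x) :=
    Real.fourier_iteratedDeriv (N := (⊤:ℕ∞)) hφ (fun n _ => hder n) le_top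
  set A0 : ℝ := ∫ x : ℝ, ‖φ x‖ with hA0
  set Ak : ℝ := ∫ x : ℝ, ‖iteratedDeriv k φ x‖ with hAk
  have hbound : ∀ g : ℝ → ℂ, ∀ w : ℝ, ‖𝓕 g w‖ ≤ ∫ x : ℝ, ‖g x‖ := by
    intro g w
    rw [Real.fourier_real_eq_integral_exp_smul]
    refine le_trans (norm_integral_le_integral_norm _) (le_of_eq ?_)
    congr 1; ext x
    rw [smul_eq_mul, norm_mul, aux13_norm_exp, one_mul]
  refine ⟨A0 + Ak, by positivity, fun η => ?_⟩
  rw [aux13_FT_eq]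
  set w : ℝ := η / (2*π) with hw
  have h2π : (0:ℝ) < 2*π := by positivity
  have hwη : 2*π*w = η := by
    rw [hw]; field_simp
  have hηw : |η| = |2*π*w| := by rw [hwη]
  have hk : |2*π*w| ^ k * ‖𝓕 φ w‖ ≤ Ak := by
    have := hbound (iteratedDeriv k φ) w
    rw [key] at this
    calc |2*π*w| ^ k * ‖𝓕 φ w‖ = ‖(2 * π * Complex.I * w) ^ k • (𝓕 φ w)‖ := by
          rw [norm_smul, norm_pow]
          congr 2
          have : (2 * π * Complex.I * w : ℂ) = ((2*π*w : ℝ) : ℂ) * Complex.I := by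
            push_cast; ring
          rw [this, norm_mul, Complex.norm_I, mul_one, Complex.norm_real, Real.norm_eq_abs]
      _ ≤ Ak := this
  have h0 : ‖𝓕 φ w‖ ≤ A0 := hbound φ w
  rcases le_total |η| 1 with h|h
  · have : max 1 |η| = 1 := max_eq_left h
    rw [this, one_pow, one_mul]
    have : (0:ℝ) ≤ Ak := by
      rw [hAk]; positivity
    linarith
  · have hm : max 1 |η| = |η| := max_eq_right h
    rw [hm, hηw]
    have : (0:ℝ) ≤ A0 := by rw [hA0]; positivity
    linarith

lemma aux13_fact : Fact (0 < 2*π) := ⟨by positivity⟩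

lemma aux13_fourier_eq (n : ℤ) (x : ℝ) :
    @fourier (2*π) n (x : AddCircle (2*π)) = Complex.exp (Complex.I * (n:ℂ) * (x:ℂ)) := by
  haveI := aux13_fact
  rw [fourier_coe_apply]
  congr 1
  have hπ : (π : ℂ) ≠ 0 := Complex.ofReal_ne_zero.mpr pi_ne_zero
  push_cast
  field_simp

lemma aux13_series (ε : ℝ) (hε : 0 < ε) (hεπ : ε < π) (f : ℝ → ℂ) (hf : Continuous f)
    (hsupp : ∀ x : ℝ, x ∉ Set.Icc (-π + ε) (π - ε) → f x = 0)
    (hsum : Summable fun n : ℤ =>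
      ‖(1 / (2 * (π:ℂ))) * ∫ t in (-π)..π, f t * Complex.exp (-Complex.I * (n:ℂ) * (t:ℂ))‖)
    {x : ℝ} (hx : x ∈ Set.Ico (-π) π) :
    HasSum (fun n : ℤ =>
      ((1 / (2 * (π:ℂ))) * ∫ t in (-π)..π, f t * Complex.exp (-Complex.I * (n:ℂ) * (t:ℂ)))
        * Complex.exp (Complex.I * (n:ℂ) * (x:ℂ))) (f x) := by
  haveI := aux13_fact
  have hππ : -π + 2*π = π := by ring
  have hfneg : f (-π) = 0 := hsupp _ (by simp only [Set.mem_Icc]; push_neg; intro h; linarith)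
  have hfpos : f π = 0 := hsupp _ (by simp only [Set.mem_Icc]; push_neg; intro h; linarith)
  have hend : f (-π) = f (-π + 2*π) := by rw [hππ, hfneg, hfpos]
  set g : AddCircle (2*π) → ℂ := AddCircle.liftIco (2*π) (-π) f with hg
  have hcont : Continuous g := AddCircle.liftIco_continuous hend (by rw [hππ]; exact hf.continuousOn)
  have hgIco : ∀ y : ℝ, y ∈ Set.Ico (-π) π → g y = f y := by
    intro y hy
    exact AddCircle.liftIco_coe_apply (by rwa [hππ])
  set G : C(AddCircle (2*π), ℂ) := ⟨g, hcont⟩ with hG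
  have hcoef : ∀ n : ℤ, fourierCoeff (⇑G) n =
      (1 / (2 * (π:ℂ))) * ∫ t in (-π)..π, f t * Complex.exp (-Complex.I * (n:ℂ) * (t:ℂ)) := by
    intro n
    rw [fourierCoeff_eq_intervalIntegral (⇑G) n (-π), hππ]
    have hInt : ∫ t in (-π)..π, @fourier (2*π) (-n) t • G t
        = ∫ t in (-π)..π, f t * Complex.exp (-Complex.I * (n:ℂ) * (t:ℂ)) := by
      refine intervalIntegral.integral_congr fun y hy => ?_
      have hy' : y ∈ Set.Icc (-π) π := by
        rwa [Set.uIcc_of_le (by linarith [pi_pos])] at hy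
      have harg : Complex.exp (Complex.I * ((-n : ℤ):ℂ) * (y:ℂ))
          = Complex.exp (-Complex.I * (n:ℂ) * (y:ℂ)) := by push_cast; ring_nf
      rcases lt_or_eq_of_le hy'.2 with h|h
      · have : g y = f y := hgIco y ⟨hy'.1, h⟩
        show @fourier (2*π) (-n) y • g y = _
        rw [aux13_fourier_eq, this, smul_eq_mul, mul_comm, harg]
      · subst h
        show @fourier (2*π) (-n) (π:ℝ) • g (π:ℝ) = f π * _
        have hcoe : ((π : ℝ) : AddCircle (2*π)) = ((-π : ℝ) : AddCircle (2*π)) := by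
          have h2 := AddCircle.coe_add_period (2*π) (-π)
          rw [hππ] at h2
          exact h2
        rw [hfpos, zero_mul, hcoe]
        have : g (((-π : ℝ) : AddCircle (2*π))) = f (-π) :=
          hgIco (-π) ⟨le_refl _, by linarith [pi_pos]⟩
        rw [this, hfneg, smul_zero]
    rw [hInt, Complex.real_smul]
    congr 1
    push_cast
    ring
  have hsum2 : Summable (fourierCoeff (⇑G)) := by
    apply Summable.of_norm
    apply hsum.congr
    intro n
    rw [hcoef n]
  have main := has_pointwise_sum_fourier_series_of_summable hsum2 (x : AddCircle (2*π))
  have hGx : G ((x : ℝ) : AddCircle (2*π)) = f x := hgIco x hx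
  rw [hGx] at main
  refine main.congr_fun fun n => ?_
  rw [hcoef n, aux13_fourier_eq, smul_eq_mul]

lemma aux13_hasSum (ε : ℝ) (hε : 0 < ε) (hεπ : ε < π) (f : ℝ → ℂ) (hf : Continuous f)
    (hsupp : ∀ x : ℝ, x ∉ Set.Icc (-π + ε) (π - ε) → f x = 0)
    (hsum : Summable fun n : ℤ =>
      ‖(1 / (2 * (π:ℂ))) * ∫ t in (-π)..π, f t * Complex.exp (-Complex.I * (n:ℂ) * (t:ℂ))‖)
    (φ : ℝ → ℂ) (hφcont : Continuous φ) (hφc : HasCompactSupport φ)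
    (hφ_one : ∀ x : ℝ, φ x * f x = f x)
    (hφ_supp : ∀ x : ℝ, φ x ≠ 0 → x ∈ Set.Ico (-π) π)
    (ξ : ℝ) :
    HasSum (fun n : ℤ =>
      ((1 / (2 * (π:ℂ))) * ∫ t in (-π)..π, f t * Complex.exp (-Complex.I * (n:ℂ) * (t:ℂ)))
        * ∫ x : ℝ, φ x * Complex.exp (-Complex.I * ((ξ - (n:ℝ) : ℝ):ℂ) * (x:ℂ)))
      (∫ x : ℝ, f x * Complex.exp (-Complex.I * (ξ:ℂ) * (x:ℂ))) := by
  set c : ℤ → ℂ := fun n =>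
    (1 / (2 * (π:ℂ))) * ∫ t in (-π)..π, f t * Complex.exp (-Complex.I * (n:ℂ) * (t:ℂ)) with hc
  set u : ℤ → ℝ → ℂ := fun n x =>
    (Complex.exp (Complex.I * ((n:ℂ) - (ξ:ℂ)) * (x:ℂ)) * φ x) * c n with hu
  have hexp1 : ∀ (n : ℤ) (x : ℝ), ‖Complex.exp (Complex.I * ((n:ℂ) - (ξ:ℂ)) * (x:ℂ))‖ = 1 := by
    intro n x
    rw [show (Complex.I * ((n:ℂ) - (ξ:ℂ)) * (x:ℂ)) =
      Complex.I * ((((n:ℝ) - ξ : ℝ)):ℂ) * (x:ℂ) by push_cast; ring]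
    exact aux13_norm_exp'' _ _
  have hφint : Integrable φ := hφcont.integrable_of_hasCompactSupport hφc
  have huint : ∀ n : ℤ, Integrable (u n) := by
    intro n
    refine Integrable.mul_const ?_ (c n)
    refine Integrable.bdd_mul (c := 1) hφint ?_ (ae_of_all _ fun x => le_of_eq (hexp1 n x))
    exact (Complex.continuous_exp.comp (continuous_const.mul
      Complex.continuous_ofReal)).aestronglyMeasurable
  have hnorm_int : ∀ n : ℤ, ∫ x : ℝ, ‖u n x‖ = (∫ x : ℝ, ‖φ x‖) * ‖c n‖ := by
    intro n
    rw [← integral_mul_const]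
    congr 1; funext x
    rw [hu]; simp only [norm_mul, hexp1 n x, one_mul]
  have hsum_int : Summable fun n : ℤ => ∫ x : ℝ, ‖u n x‖ := by
    refine Summable.congr (hsum.mul_left (∫ x : ℝ, ‖φ x‖)) fun n => ?_
    rw [hnorm_int n]
  have key := hasSum_integral_of_summable_integral_norm huint hsum_int
  have htsum : ∀ x : ℝ, (∑' n : ℤ, u n x) = f x * Complex.exp (-Complex.I * (ξ:ℂ) * (x:ℂ)) := by
    intro x
    by_cases hx : φ x = 0
    · have hfx : f x = 0 := by rw [← hφ_one x, hx, zero_mul]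
      simp [hu, hx, hfx]
    · have hx' := hφ_supp x hx
      have hs := aux13_series ε hε hεπ f hf hsupp hsum hx'
      have hs' := hs.mul_right (Complex.exp (-Complex.I * (ξ:ℂ) * (x:ℂ)) * φ x)
      have h2 : f x * (Complex.exp (-Complex.I * (ξ:ℂ) * (x:ℂ)) * φ x)
          = f x * Complex.exp (-Complex.I * (ξ:ℂ) * (x:ℂ)) := by
        rw [show f x * (Complex.exp (-Complex.I * (ξ:ℂ) * (x:ℂ)) * φ x)
          = (φ x * f x) * Complex.exp (-Complex.I * (ξ:ℂ) * (x:ℂ)) by ring, hφ_one x]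
      rw [h2] at hs'
      refine HasSum.tsum_eq (hs'.congr_fun fun n => ?_)
      rw [hu]
      simp only []
      rw [show Complex.I * ((n:ℂ) - (ξ:ℂ)) * (x:ℂ)
        = Complex.I * (n:ℂ) * (x:ℂ) + (-Complex.I * (ξ:ℂ) * (x:ℂ)) by ring, Complex.exp_add]
      ring
  have hint : ∀ n : ℤ, (∫ x : ℝ, u n x)
      = c n * ∫ x : ℝ, φ x * Complex.exp (-Complex.I * ((ξ - (n:ℝ) : ℝ):ℂ) * (x:ℂ)) := by
    intro n
    rw [hu]
    simp only []
    rw [show (fun x : ℝ => (Complex.exp (Complex.I * ((n:ℂ) - (ξ:ℂ)) * (x:ℂ)) * φ x) * c n)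
      = fun x : ℝ => (φ x * Complex.exp (-Complex.I * ((ξ - (n:ℝ) : ℝ):ℂ) * (x:ℂ))) • c n from
      funext fun x => by
        rw [show (-Complex.I * ((ξ - (n:ℝ) : ℝ):ℂ) * (x:ℂ))
          = Complex.I * ((n:ℂ) - (ξ:ℂ)) * (x:ℂ) by push_cast; ring, smul_eq_mul]
        ring]
    rw [integral_smul_const, smul_eq_mul, mul_comm]
  have hfin : (∫ x : ℝ, (∑' n : ℤ, u n x))
      = ∫ x : ℝ, f x * Complex.exp (-Complex.I * (ξ:ℂ) * (x:ℂ)) := by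
    congr 1; funext x; exact htsum x
  rw [hfin] at key
  exact key.congr_fun fun n => (hint n).symm

lemma aux13_sum2 : Summable fun m : ℤ => (1 + |(m:ℝ)|) ^ (-(2:ℝ)) := by
  refine Summable.of_norm_bounded_eventually (g := fun m : ℤ => |(m:ℝ)| ^ (-(2:ℝ)))
    (Real.summable_abs_int_rpow (by norm_num)) (Filter.eventually_cofinite.mpr ?_)
  have : {m : ℤ | ¬ ‖(1 + |(m:ℝ)|) ^ (-(2:ℝ))‖ ≤ |(m:ℝ)| ^ (-(2:ℝ))} ⊆ {0} := by
    intro m hm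
    simp only [Set.mem_setOf_eq] at hm
    by_contra h0
    apply hm
    have hm0 : (0:ℝ) < |(m:ℝ)| := by
      simp only [Set.mem_singleton_iff] at h0
      have : (m:ℝ) ≠ 0 := by exact_mod_cast h0
      positivity
    rw [Real.norm_eq_abs, abs_of_nonneg (Real.rpow_nonneg (by positivity) _)]
    exact Real.rpow_le_rpow_of_nonpos hm0 (by linarith [abs_nonneg (m:ℝ)]) (by norm_num)
  exact Set.Finite.subset (Set.finite_singleton 0) this

lemma aux13_shift (ξ : ℝ) (n : ℤ) :
    (1 + |ξ - (n:ℝ)|) ^ (-(2:ℝ)) ≤ 4 * (1 + |((n - ⌊ξ⌋ : ℤ):ℝ)|) ^ (-(2:ℝ)) := by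
  set m : ℤ := n - ⌊ξ⌋ with hm
  have h1 : |((m:ℤ):ℝ)| ≤ |ξ - n| + 1 := by
    have hfl : |ξ - (⌊ξ⌋:ℝ)| ≤ 1 := by
      rw [abs_of_nonneg (by linarith [Int.floor_le ξ])]
      linarith [Int.lt_floor_add_one ξ]
    have : ((m:ℤ):ℝ) = ((n:ℝ) - ξ) + (ξ - (⌊ξ⌋:ℝ)) := by push_cast [hm]; ring
    rw [this]
    calc |((n:ℝ) - ξ) + (ξ - (⌊ξ⌋:ℝ))| ≤ |(n:ℝ) - ξ| + |ξ - (⌊ξ⌋:ℝ)| := abs_add_le _ _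
      _ ≤ |ξ - n| + 1 := by rw [abs_sub_comm]; linarith
  have h2 : (1 + |((m:ℤ):ℝ)|) / 2 ≤ 1 + |ξ - n| := by linarith [abs_nonneg (ξ - (n:ℝ))]
  have h3 : (1 + |ξ - (n:ℝ)|) ^ (-(2:ℝ)) ≤ ((1 + |((m:ℤ):ℝ)|) / 2) ^ (-(2:ℝ)) :=
    Real.rpow_le_rpow_of_nonpos (by positivity) h2 (by norm_num)
  refine h3.trans (le_of_eq ?_)
  have h4 : (2:ℝ) ^ (-(2:ℝ)) = 1/4 := by
    rw [show (-(2:ℝ)) = -((2:ℕ):ℝ) by norm_num, Real.rpow_neg (by norm_num), Real.rpow_natCast]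
    norm_num
  rw [Real.div_rpow (by positivity) (by norm_num), h4]
  field_simp

set_option maxHeartbeats 2000000 in
lemma aux13_hard (β ε : ℝ) (hβ : 1 < β) (hε : 0 < ε) (hεπ : ε < π)
    (f : ℝ → ℂ) (hf : Continuous f)
    (hsupp : ∀ x : ℝ, x ∉ Set.Icc (-π + ε) (π - ε) → f x = 0)
    (hsum : Summable fun n : ℤ =>
      ‖(1 / (2 * (π:ℂ))) * ∫ t in (-π)..π, f t * Complex.exp (-Complex.I * (n:ℂ) * (t:ℂ))‖)
    (M : ℝ)
    (hM : ∀ n : ℤ, |(n:ℝ)| ^ β *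
      ‖(1 / (2 * (π:ℂ))) * ∫ t in (-π)..π, f t * Complex.exp (-Complex.I * (n:ℂ) * (t:ℂ))‖ ≤ M) :
    ∃ K : ℝ, 0 ≤ K ∧ ∀ ξ : ℝ,
      (1 + |ξ|) ^ β * ‖∫ x : ℝ, f x * Complex.exp (-Complex.I * (ξ:ℂ) * (x:ℂ))‖ ≤ K := by
  set c : ℤ → ℂ := fun n =>
    (1 / (2 * (π:ℂ))) * ∫ t in (-π)..π, f t * Complex.exp (-Complex.I * (n:ℂ) * (t:ℂ)) with hc
  -- the bump function
  set φb : ContDiffBump (0:ℝ) := ⟨π - ε, π - ε/2, by linarith, by linarith⟩ with hφb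
  set φ : ℝ → ℂ := fun x => ((φb x : ℝ) : ℂ) with hφ
  have hφcont : Continuous φ := Complex.continuous_ofReal.comp φb.continuous
  have hφc : HasCompactSupport φ :=
    φb.hasCompactSupport.comp_left (g := fun r : ℝ => (r:ℂ)) Complex.ofReal_zero
  have hφ_one : ∀ x : ℝ, φ x * f x = f x := by
    intro x
    by_cases hfx : f x = 0
    · rw [hfx, mul_zero]
    · have hx : x ∈ Set.Icc (-π + ε) (π - ε) := by
        by_contra hcon; exact hfx (hsupp x hcon)
      have h1 : φb x = 1 := by
        apply φb.one_of_mem_closedBall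
        rw [Metric.mem_closedBall, Real.dist_eq, sub_zero]
        have : |x| ≤ π - ε := abs_le.mpr ⟨by linarith [hx.1], by linarith [hx.2]⟩
        simpa [hφb] using this
      rw [hφ]; simp only [h1, Complex.ofReal_one, one_mul]
  have hφ_supp : ∀ x : ℝ, φ x ≠ 0 → x ∈ Set.Ico (-π) π := by
    intro x hx
    have hb : φb x ≠ 0 := fun h => hx (by rw [hφ]; simp [h])
    have : x ∈ Function.support φb := hb
    rw [φb.support_eq, Metric.mem_ball, Real.dist_eq, sub_zero] at this
    have hout : |x| < π - ε/2 := by simpa [hφb] using this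
    have h1 := abs_lt.mp hout
    exact ⟨by linarith [h1.1], by linarith [h1.2]⟩
  have hφsmooth : ContDiff ℝ ((⊤:ℕ∞)) φ := Complex.ofRealCLM.contDiff.comp φb.contDiff
  set k : ℕ := ⌈β⌉₊ + 2 with hk
  obtain ⟨B, hB0, hB⟩ := aux13_phi_decay φ hφsmooth hφc k
  set B2 : ℝ := 2 ^ (β + 2) * B with hB2
  have hB20 : 0 ≤ B2 := by positivity
  set Φ : ℝ → ℂ := fun η => ∫ x : ℝ, φ x * Complex.exp (-Complex.I * (η:ℂ) * (x:ℂ)) with hΦdef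
  have hβk : β + 2 ≤ (k : ℝ) := by
    have := Nat.le_ceil β
    push_cast [hk]
    push_cast at this
    linarith
  have hΦ : ∀ η : ℝ, ‖Φ η‖ ≤ B2 * (1 + |η|) ^ (-(β + 2)) := by
    intro η
    have h1 : (0:ℝ) < 1 + |η| := by positivity
    have hstep : (1 + |η|) ^ (β + 2) ≤ 2 ^ (β + 2) * (max 1 |η|) ^ k := by
      have e1 : (1 + |η|) ≤ 2 * max 1 |η| := by
        rcases le_total 1 |η| with h|h
        · rw [max_eq_right h]; linarith
        · rw [max_eq_left h]; linarith
      have e2 : (1 + |η|) ^ (β + 2) ≤ (2 * max 1 |η|) ^ (β + 2) :=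
        Real.rpow_le_rpow (by positivity) e1 (by linarith)
      have e3 : (2 * max 1 |η|) ^ (β + 2) = 2 ^ (β + 2) * (max 1 |η|) ^ (β + 2) :=
        Real.mul_rpow (by norm_num) (le_trans zero_le_one (le_max_left _ _))
      have e4 : (max 1 |η|) ^ (β + 2) ≤ (max 1 |η|) ^ (k : ℝ) :=
        Real.rpow_le_rpow_of_exponent_le (le_max_left _ _) hβk
      have e5 : (max 1 |η|) ^ (k:ℝ) = (max 1 |η|) ^ k := Real.rpow_natCast _ k
      calc (1 + |η|) ^ (β + 2) ≤ (2 * max 1 |η|) ^ (β + 2) := e2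
        _ = 2 ^ (β + 2) * (max 1 |η|) ^ (β + 2) := e3
        _ ≤ 2 ^ (β + 2) * (max 1 |η|) ^ k := by
            rw [← e5]; exact mul_le_mul_of_nonneg_left e4 (by positivity)
    have hpow : (0:ℝ) < (1 + |η|) ^ (β + 2) := Real.rpow_pos_of_pos h1 _
    have hBη : (max 1 |η|) ^ k * ‖Φ η‖ ≤ B := hB η
    rw [Real.rpow_neg h1.le, ← div_eq_mul_inv, le_div_iff₀ hpow]
    calc ‖Φ η‖ * (1 + |η|) ^ (β + 2)
        ≤ ‖Φ η‖ * (2 ^ (β + 2) * (max 1 |η|) ^ k) :=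
          mul_le_mul_of_nonneg_left hstep (norm_nonneg _)
      _ = 2 ^ (β + 2) * ((max 1 |η|) ^ k * ‖Φ η‖) := by ring
      _ ≤ 2 ^ (β + 2) * B := mul_le_mul_of_nonneg_left hBη (by positivity)
      _ = B2 := hB2.symm
  -- coefficient decay
  have hM0 : 0 ≤ M := le_trans (by positivity) (hM 1)
  set D : ℝ := max (2 ^ β * M) ‖c 0‖ with hD0
  have hDnn : 0 ≤ D := le_trans (by positivity) (le_max_left _ _)
  have hD : ∀ n : ℤ, ‖c n‖ ≤ D * (1 + |(n:ℝ)|) ^ (-β) := by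
    intro n
    by_cases hn : n = 0
    · subst hn
      simp only [Int.cast_zero, abs_zero, add_zero, Real.one_rpow, mul_one]
      exact le_max_right _ _
    · have h1 : (1:ℝ) ≤ |(n:ℝ)| := by
        have := Int.one_le_abs hn
        calc (1:ℝ) = ((1:ℤ):ℝ) := by norm_num
          _ ≤ ((|n|:ℤ):ℝ) := by exact_mod_cast this
          _ = |(n:ℝ)| := by push_cast; ring
      have hpow : (0:ℝ) < |(n:ℝ)| ^ β := Real.rpow_pos_of_pos (by linarith) β
      have hpow1 : (0:ℝ) < (1 + |(n:ℝ)|) ^ β := Real.rpow_pos_of_pos (by linarith) β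
      have e1 : ‖c n‖ ≤ M / |(n:ℝ)| ^ β := by
        rw [le_div_iff₀ hpow, mul_comm]
        exact hM n
      have e2 : (1 + |(n:ℝ)|) ^ β ≤ 2 ^ β * |(n:ℝ)| ^ β := by
        rw [← Real.mul_rpow (by norm_num) (abs_nonneg _)]
        exact Real.rpow_le_rpow (by linarith) (by linarith) (by linarith)
      have e3 : M / |(n:ℝ)| ^ β ≤ (2 ^ β * M) * (1 + |(n:ℝ)|) ^ (-β) := by
        rw [Real.rpow_neg (by linarith), ← div_eq_mul_inv, div_le_div_iff₀ hpow hpow1]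
        calc M * (1 + |(n:ℝ)|) ^ β ≤ M * (2 ^ β * |(n:ℝ)| ^ β) :=
              mul_le_mul_of_nonneg_left e2 hM0
          _ = 2 ^ β * M * |(n:ℝ)| ^ β := by ring
      refine e1.trans (e3.trans ?_)
      exact mul_le_mul_of_nonneg_right (le_max_left _ _)
        (Real.rpow_nonneg (by positivity) _)
  -- final estimate
  set S2 : ℝ := ∑' m : ℤ, (1 + |(m:ℝ)|) ^ (-(2:ℝ)) with hS2
  have hS2nn : 0 ≤ S2 := tsum_nonneg fun m => Real.rpow_nonneg (by positivity) _
  refine ⟨4 * (D * B2) * S2, by positivity, fun ξ => ?_⟩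
  have key := aux13_hasSum ε hε hεπ f hf hsupp hsum φ hφcont hφc hφ_one hφ_supp ξ
  have key' : HasSum (fun n : ℤ => c n * Φ (ξ - (n:ℝ))) 
      (∫ x : ℝ, f x * Complex.exp (-Complex.I * (ξ:ℂ) * (x:ℂ))) := key
  have hterm_bd : ∀ n : ℤ, ‖c n * Φ (ξ - (n:ℝ))‖ ≤ ‖c n‖ * B2 := by
    intro n
    rw [norm_mul]
    refine mul_le_mul_of_nonneg_left ((hΦ _).trans ?_) (norm_nonneg _)
    have : (1 + |ξ - (n:ℝ)|) ^ (-(β + 2)) ≤ 1 :=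
      Real.rpow_le_one_of_one_le_of_nonpos (by linarith [abs_nonneg (ξ - (n:ℝ))]) (by linarith)
    nlinarith
  have hsumnorm : Summable fun n : ℤ => ‖c n * Φ (ξ - (n:ℝ))‖ :=
    Summable.of_nonneg_of_le (fun n => norm_nonneg _) hterm_bd (hsum.mul_right B2)
  have hFle : ‖∫ x : ℝ, f x * Complex.exp (-Complex.I * (ξ:ℂ) * (x:ℂ))‖
      ≤ ∑' n : ℤ, ‖c n * Φ (ξ - (n:ℝ))‖ := by
    rw [← key'.tsum_eq]
    exact norm_tsum_le_tsum_norm hsumnorm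
  have hterm : ∀ n : ℤ, (1 + |ξ|) ^ β * ‖c n * Φ (ξ - (n:ℝ))‖
      ≤ (4 * (D * B2)) * (1 + |((n - ⌊ξ⌋ : ℤ):ℝ)|) ^ (-(2:ℝ)) := by
    intro n
    have h1 : (0:ℝ) < 1 + |(n:ℝ)| := by positivity
    have h2 : (0:ℝ) < 1 + |ξ - (n:ℝ)| := by positivity
    have hsplit : (1 + |ξ|) ^ β ≤ (1 + |(n:ℝ)|) ^ β * (1 + |ξ - (n:ℝ)|) ^ β := by
      rw [← Real.mul_rpow h1.le h2.le]
      refine Real.rpow_le_rpow (by positivity) ?_ (by linarith)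
      have habs : |ξ| ≤ |(n:ℝ)| + |ξ - (n:ℝ)| := by
        calc |ξ| = |(n:ℝ) + (ξ - (n:ℝ))| := by ring_nf
          _ ≤ |(n:ℝ)| + |ξ - (n:ℝ)| := abs_add_le _ _
      nlinarith [abs_nonneg (n:ℝ), abs_nonneg (ξ - (n:ℝ))]
    have hnorm_bd : ‖c n * Φ (ξ - (n:ℝ))‖
        ≤ (D * (1 + |(n:ℝ)|) ^ (-β)) * (B2 * (1 + |ξ - (n:ℝ)|) ^ (-(β + 2))) := by
      rw [norm_mul]
      exact mul_le_mul (hD n) (hΦ _) (norm_nonneg _) (by positivity)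
    calc (1 + |ξ|) ^ β * ‖c n * Φ (ξ - (n:ℝ))‖
        ≤ ((1 + |(n:ℝ)|) ^ β * (1 + |ξ - (n:ℝ)|) ^ β) *
            ((D * (1 + |(n:ℝ)|) ^ (-β)) * (B2 * (1 + |ξ - (n:ℝ)|) ^ (-(β + 2)))) := by
          exact mul_le_mul hsplit hnorm_bd (norm_nonneg _) (by positivity)
      _ = (D * B2) * (((1 + |(n:ℝ)|) ^ β * (1 + |(n:ℝ)|) ^ (-β)) *
            ((1 + |ξ - (n:ℝ)|) ^ β * (1 + |ξ - (n:ℝ)|) ^ (-(β + 2)))) := by ring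
      _ = (D * B2) * (1 + |ξ - (n:ℝ)|) ^ (-(2:ℝ)) := by
          rw [← Real.rpow_add h1, ← Real.rpow_add h2]
          norm_num
      _ ≤ (D * B2) * (4 * (1 + |((n - ⌊ξ⌋ : ℤ):ℝ)|) ^ (-(2:ℝ))) :=
          mul_le_mul_of_nonneg_left (aux13_shift ξ n) (by positivity)
      _ = (4 * (D * B2)) * (1 + |((n - ⌊ξ⌋ : ℤ):ℝ)|) ^ (-(2:ℝ)) := by ring
  have hsumR : Summable fun n : ℤ => (1 + |((n - ⌊ξ⌋ : ℤ):ℝ)|) ^ (-(2:ℝ)) :=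
    (Equiv.subRight (⌊ξ⌋ : ℤ)).summable_iff.mpr aux13_sum2
  have htsumR : ∑' n : ℤ, (1 + |((n - ⌊ξ⌋ : ℤ):ℝ)|) ^ (-(2:ℝ)) = S2 :=
    (Equiv.subRight (⌊ξ⌋ : ℤ)).tsum_eq fun m : ℤ => (1 + |(m:ℝ)|) ^ (-(2:ℝ))
  calc (1 + |ξ|) ^ β * ‖∫ x : ℝ, f x * Complex.exp (-Complex.I * (ξ:ℂ) * (x:ℂ))‖
      ≤ (1 + |ξ|) ^ β * ∑' n : ℤ, ‖c n * Φ (ξ - (n:ℝ))‖ :=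
        mul_le_mul_of_nonneg_left hFle (Real.rpow_nonneg (by positivity) _)
    _ = ∑' n : ℤ, (1 + |ξ|) ^ β * ‖c n * Φ (ξ - (n:ℝ))‖ := (tsum_mul_left).symm
    _ ≤ ∑' n : ℤ, (4 * (D * B2)) * (1 + |((n - ⌊ξ⌋ : ℤ):ℝ)|) ^ (-(2:ℝ)) :=
        Summable.tsum_le_tsum hterm (hsumnorm.mul_left _) (hsumR.mul_left _)
    _ = (4 * (D * B2)) * ∑' n : ℤ, (1 + |((n - ⌊ξ⌋ : ℤ):ℝ)|) ^ (-(2:ℝ)) := tsum_mul_left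
    _ = 4 * (D * B2) * S2 := by rw [htsumR]

lemma aux13_cont (f : ℝ → ℂ) (hf : Continuous f) (hfint : Integrable f) :
    Continuous fun ξ : ℝ =>
      ∫ x : ℝ, f x * Complex.exp (-Complex.I * (ξ:ℂ) * (x:ℂ)) := by
  apply continuous_of_dominated (bound := fun x => ‖f x‖)
  · intro ξ
    exact (hf.mul (Complex.continuous_exp.comp
      (continuous_const.mul Complex.continuous_ofReal))).aestronglyMeasurable
  · intro ξ
    refine ae_of_all _ fun x => ?_
    rw [norm_mul, aux13_norm_exp' ξ x, mul_one]
  · exact hfint.norm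
  · refine ae_of_all _ fun x => ?_
    exact continuous_const.mul (Complex.continuous_exp.comp
      ((continuous_const.mul Complex.continuous_ofReal).mul continuous_const))

set_option maxHeartbeats 2000000 in
/-- For `f` continuous, supported in `[-π+ε, π-ε]` and `β > 1`: the periodic Fourier
coefficients of `f` are absolutely summable with `O(|n|^{-β})` decay iff the Fourier
transform of `f` on the line is in `L¹` with `O(|ξ|^{-β})` decay. -/
theorem stmt_13 (β ε : ℝ) (hβ : 1 < β) (hε : 0 < ε) (hεπ : ε < π)
    (f : ℝ → ℂ) (hf : Continuous f)
    (hsupp : ∀ x : ℝ, x ∉ Set.Icc (-π + ε) (π - ε) → f x = 0) :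
    ((Summable fun n : ℤ =>
        ‖(1 / (2 * (π : ℂ))) *
          ∫ x in (-π)..π, f x * Complex.exp (-Complex.I * (n : ℂ) * (x : ℂ))‖) ∧
      ∃ M : ℝ, ∀ n : ℤ,
        |(n : ℝ)| ^ β *
          ‖(1 / (2 * (π : ℂ))) *
            ∫ x in (-π)..π, f x * Complex.exp (-Complex.I * (n : ℂ) * (x : ℂ))‖ ≤ M)
    ↔
    ((Integrable fun ξ : ℝ =>
        ∫ x : ℝ, f x * Complex.exp (-Complex.I * (ξ : ℂ) * (x : ℂ))) ∧
      ∃ M : ℝ, ∀ ξ : ℝ,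
        |ξ| ^ β *
          ‖∫ x : ℝ, f x * Complex.exp (-Complex.I * (ξ : ℂ) * (x : ℂ))‖ ≤ M) := by
  have hβ0 : 0 < β := by linarith
  have hvan : ∀ (w : ℂ) (x : ℝ), x ∉ Set.Ioc (-π) π →
      f x * Complex.exp (-Complex.I * w * (x:ℂ)) = 0 := by
    intro w x hx
    rw [hsupp x, zero_mul]
    intro hmem
    rw [Set.mem_Icc] at hmem
    rw [Set.mem_Ioc] at hx
    push_neg at hx
    rcases lt_or_ge (-π) x with h|h
    · have := hx h
      exact absurd hmem.2 (by linarith)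
    · exact absurd hmem.1 (by linarith)
  have hint_eq : ∀ n : ℤ,
      (∫ x in (-π)..π, f x * Complex.exp (-Complex.I * (n:ℂ) * (x:ℂ)))
        = ∫ x : ℝ, f x * Complex.exp (-Complex.I * (((n:ℝ)):ℂ) * (x:ℂ)) := by
    intro n
    rw [aux13_int_eq _ (hvan (n:ℂ))]
    norm_num [Complex.ofReal_intCast]
  have hnorm_half : ‖(1 / (2 * (π:ℂ)))‖ = 1 / (2*π) := by
    rw [show (1 / (2 * (π:ℂ))) = (((1/(2*π):ℝ)):ℂ) by push_cast; ring,
      Complex.norm_real, Real.norm_eq_abs, abs_of_pos (by positivity)]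
  constructor
  · rintro ⟨hs, M, hM⟩
    obtain ⟨K, hK0, hK⟩ := aux13_hard β ε hβ hε hεπ f hf hsupp hs M hM
    have hfint : Integrable f :=
      hf.integrable_of_hasCompactSupport (HasCompactSupport.intro isCompact_Icc hsupp)
    have hFcont : Continuous fun ξ : ℝ =>
        ∫ x : ℝ, f x * Complex.exp (-Complex.I * (ξ:ℂ) * (x:ℂ)) := aux13_cont f hf hfint
    constructor
    · have hdom : Integrable (fun ξ : ℝ => K * (1 + ‖ξ‖) ^ (-β)) :=
        (integrable_one_add_norm (E := ℝ) (μ := volume)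
          (by simpa using hβ)).const_mul K
      refine hdom.mono' hFcont.aestronglyMeasurable (ae_of_all _ fun ξ => ?_)
      have h1 : (0:ℝ) < 1 + |ξ| := by positivity
      have hpow : (0:ℝ) < (1 + |ξ|) ^ β := Real.rpow_pos_of_pos h1 _
      have := hK ξ
      rw [Real.norm_eq_abs ξ, Real.rpow_neg h1.le, ← div_eq_mul_inv, le_div_iff₀ hpow]
      linarith [this, mul_comm ((1 + |ξ|) ^ β)
        ‖∫ x : ℝ, f x * Complex.exp (-Complex.I * (ξ:ℂ) * (x:ℂ))‖]
    · refine ⟨K, fun ξ => ?_⟩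
      refine le_trans ?_ (hK ξ)
      refine mul_le_mul_of_nonneg_right ?_ (norm_nonneg _)
      exact Real.rpow_le_rpow (abs_nonneg _) (by linarith [abs_nonneg ξ]) (by linarith)
  · rintro ⟨hint, M, hM⟩
    have hM0 : 0 ≤ M := le_trans (by positivity) (hM 1)
    have hcn : ∀ n : ℤ,
        ‖(1 / (2 * (π:ℂ))) * ∫ x in (-π)..π, f x * Complex.exp (-Complex.I * (n:ℂ) * (x:ℂ))‖
        = (1/(2*π)) * ‖∫ x : ℝ, f x * Complex.exp (-Complex.I * (((n:ℝ)):ℂ) * (x:ℂ))‖ := by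
      intro n
      rw [norm_mul, hint_eq n, hnorm_half]
    constructor
    · refine Summable.of_norm_bounded_eventually
        (g := fun n : ℤ => (1/(2*π)) * (M * |(n:ℝ)| ^ (-β)))
        (((Real.summable_abs_int_rpow hβ).mul_left M).mul_left _) (Filter.eventually_cofinite.mpr ?_)
      have hsub : {n : ℤ | ¬ ‖‖(1 / (2 * (π:ℂ))) *
          ∫ x in (-π)..π, f x * Complex.exp (-Complex.I * (n:ℂ) * (x:ℂ))‖‖
          ≤ (1/(2*π)) * (M * |(n:ℝ)| ^ (-β))} ⊆ {0} := by
        intro n hn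
        simp only [Set.mem_setOf_eq] at hn
        by_contra h0
        apply hn
        have hn0 : n ≠ 0 := by simpa using h0
        have h1 : (0:ℝ) < |(n:ℝ)| := by
          have : (n:ℝ) ≠ 0 := by exact_mod_cast hn0
          positivity
        have hpow : (0:ℝ) < |(n:ℝ)| ^ β := Real.rpow_pos_of_pos h1 _
        rw [Real.norm_eq_abs, abs_of_nonneg (norm_nonneg _), hcn n]
        refine mul_le_mul_of_nonneg_left ?_ (by positivity)
        rw [Real.rpow_neg h1.le, ← div_eq_mul_inv, le_div_iff₀ hpow, mul_comm]
        exact hM (n:ℝ)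
      exact Set.Finite.subset (Set.finite_singleton 0) hsub
    · refine ⟨(1/(2*π)) * M, fun n => ?_⟩
      rw [hcn n]
      calc |(n:ℝ)| ^ β * ((1/(2*π)) *
            ‖∫ x : ℝ, f x * Complex.exp (-Complex.I * (((n:ℝ)):ℂ) * (x:ℂ))‖)
          = (1/(2*π)) * (|(n:ℝ)| ^ β *
            ‖∫ x : ℝ, f x * Complex.exp (-Complex.I * (((n:ℝ)):ℂ) * (x:ℂ))‖) := by ring
        _ ≤ (1/(2*π)) * M := mul_le_mul_of_nonneg_left (hM (n:ℝ)) (by positivity)
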